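/- Cancellation for strong Θ-cokernels on nullhomotopies: assume (ℬ, Θ) satisfies the reduced interchange and (𝒞(f), c_f, γ_f) is a strong Θ-cokernel of f : A → B. If g : 𝒞(f) → C and φ, ψ ∈ Θ(g) satisfy c_f ∘ φ = c_f ∘ ψ, then φ = ψ. -/
import Mathlib


open CategoryTheory Limits

universe v u v' u'

/-- A structure of nullhomotopies on a category, with nullhomotopies on `g : X ⟶ Y`
given as a subset of an ambient type `E X Y`. -/
structure NullStruct (B : Type u) [Category.{v} B] where
  E : B → B → Type v
  theta : ∀ {X Y : B}, (X ⟶ Y) → Set (E X Y)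
  comp : ∀ {A X Y D : B}, (A ⟶ X) → (Y ⟶ D) → E X Y → E A D
  comp_mem : ∀ {A X Y D : B} (f : A ⟶ X) {g : X ⟶ Y} (h : Y ⟶ D) {φ : E X Y},
    φ ∈ theta g → comp f h φ ∈ theta (f ≫ g ≫ h)
  comp_comp : ∀ {A' A X Y D D' : B} (f' : A' ⟶ A) (f : A ⟶ X) {g : X ⟶ Y}
    (h : Y ⟶ D) (h' : D ⟶ D') {φ : E X Y}, φ ∈ theta g →
    comp (f' ≫ f) (h ≫ h') φ = comp f' h' (comp f h φ)
  id_comp : ∀ {X Y : B} {g : X ⟶ Y} {φ : E X Y}, φ ∈ theta g →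
    comp (𝟙 X) (𝟙 Y) φ = φ

/-- The nullhomotopy structure `Θ_∅` on a category with an initial object. -/
noncomputable def thetaEmpty (A : Type u) [Category.{v} A] [HasInitial A] : NullStruct A where
  E X _ := X ⟶ ⊥_ A
  theta {X Y} g := {φ | φ ≫ initial.to Y = g}
  comp f _ φ := f ≫ φ
  comp_mem := by
    intro W X Y D f g h φ hφ
    simp only [Set.mem_setOf_eq] at hφ ⊢
    rw [Category.assoc, ← hφ]
    congr 1
    rw [Category.assoc]
    congr 1
    apply Subsingleton.elim
  comp_comp := by intros; simp
  id_comp := by intros; simp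

/-- The diagonal nullhomotopy structure `Θ_Δ` on the arrow category. -/
def thetaDelta (A : Type u) [Category.{v} A] : NullStruct (Arrow A) where
  E X Y := X.right ⟶ Y.left
  theta {X Y} g := {φ | X.hom ≫ φ = g.left ∧ φ ≫ Y.hom = g.right}
  comp f h φ := f.right ≫ φ ≫ h.left
  comp_mem := by
    intro W X Y D f g h φ hφ
    obtain ⟨h1, h2⟩ := hφ
    constructor
    · show W.hom ≫ f.right ≫ φ ≫ h.left = (f ≫ g ≫ h).left
      rw [← Arrow.w_assoc f, reassoc_of% h1]
      rfl
    · show (f.right ≫ φ ≫ h.left) ≫ _ = (f ≫ g ≫ h).right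
      simp only [Category.assoc]
      rw [Arrow.w h, reassoc_of% h2]
      rfl
  comp_comp := by intros; simp
  id_comp := by intros; simp

/-- Reduced interchange. -/
def ReducedInterchange {B : Type u} [Category.{v} B] (N : NullStruct B) : Prop :=
  ∀ {X Y Z : B} (f : X ⟶ Y) (g : Y ⟶ Z) (α : N.E X Y) (β : N.E Y Z),
    α ∈ N.theta f → β ∈ N.theta g → N.comp (𝟙 X) g α = N.comp f (𝟙 Z) β

/-- A `Θ`-cokernel. -/
structure IsThetaCokernel {B : Type u} [Category.{v} B] (N : NullStruct B)
    {X Y Q : B} (g : X ⟶ Y) (c : Y ⟶ Q) (γ : N.E X Q) : Prop where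
  mem : γ ∈ N.theta (g ≫ c)
  factor : ∀ {D : B} (h : Y ⟶ D) (φ : N.E X D), φ ∈ N.theta (g ≫ h) →
    ∃! h' : Q ⟶ D, c ≫ h' = h ∧ N.comp (𝟙 X) h' γ = φ

/-- A strong `Θ`-cokernel. -/
structure IsStrongThetaCokernel {B : Type u} [Category.{v} B] (N : NullStruct B)
    {X Y Q : B} (g : X ⟶ Y) (c : Y ⟶ Q) (γ : N.E X Q)
    extends IsThetaCokernel N g c γ : Prop where
  strong : ∀ {D : B} (h : Q ⟶ D) (φ : N.E Y D), φ ∈ N.theta (c ≫ h) →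
    N.comp g (𝟙 D) φ = N.comp (𝟙 X) h γ →
    ∃! φ' : N.E Q D, φ' ∈ N.theta h ∧ N.comp c (𝟙 D) φ' = φ

/-- A pushout square which is strong with respect to nullhomotopies. -/
def PushoutThetaStrong {B : Type u} [Category.{v} B] (N : NullStruct B)
    {Z X Y P : B} (f : Z ⟶ X) (g : Z ⟶ Y) (h : X ⟶ P) (i : Y ⟶ P) : Prop :=
  ∀ {D : B} (x : X ⟶ D) (y : Y ⟶ D) (z : P ⟶ D), h ≫ z = x → i ≫ z = y →
    ∀ (φ : N.E X D) (ψ : N.E Y D), φ ∈ N.theta x → ψ ∈ N.theta y →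
      N.comp f (𝟙 D) φ = N.comp g (𝟙 D) ψ →
      ∃! χ : N.E P D, χ ∈ N.theta z ∧ N.comp h (𝟙 D) χ = φ ∧ N.comp i (𝟙 D) χ = ψ

/-- A `Θ`-strong initial object. -/
def InitialThetaStrong {B : Type u} [Category.{v} B] (N : NullStruct B) [HasInitial B] : Prop :=
  ∀ X : B, ∃! γ : N.E (⊥_ B) X, γ ∈ N.theta (initial.to X)

/-- The embedding `Γ : 𝒜 → Arr(𝒜)` sending `X` to `∅ → X`. -/
@[simps]
noncomputable def Gam (A : Type u) [Category.{v} A] [HasInitial A] : A ⥤ Arrow A where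
  obj X := Arrow.mk (initial.to X)
  map {X Y} g := Arrow.homMk (u := 𝟙 (⊥_ A)) (v := g) (by apply Limits.initial.hom_ext)
  map_id X := by apply CommaMorphism.ext <;> simp
  map_comp f g := by apply CommaMorphism.ext <;> simp

/-- cancellation for strong `Θ`-cokernels on nullhomotopies, under
the reduced interchange. -/
theorem stmt10 {C : Type u} [Category.{v} C] (N : NullStruct C)
    (hri : ReducedInterchange N) {A B Q D : C}
    (f : A ⟶ B) (c : B ⟶ Q) (γ : N.E A Q) (hc : IsStrongThetaCokernel N f c γ)
    (g : Q ⟶ D) (φ ψ : N.E Q D) (hφ : φ ∈ N.theta g) (hψ : ψ ∈ N.theta g)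
    (e : N.comp c (𝟙 D) φ = N.comp c (𝟙 D) ψ) : φ = ψ := by
  have hmem : N.comp c (𝟙 D) φ ∈ N.theta (c ≫ g) := by
    have := N.comp_mem c (𝟙 D) hφ
    simpa using this
  have hcc : N.comp f (𝟙 D) (N.comp c (𝟙 D) φ) = N.comp (𝟙 A) g γ := by
    have h1 : N.comp (f ≫ c) (𝟙 D ≫ 𝟙 D) φ = N.comp f (𝟙 D) (N.comp c (𝟙 D) φ) :=
      N.comp_comp f c (𝟙 D) (𝟙 D) hφ
    have h2 := hri (f ≫ c) g γ φ hc.mem hφ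
    rw [← h1, h2]
    simp
  obtain ⟨χ, _, huniq⟩ := hc.strong g (N.comp c (𝟙 D) φ) hmem hcc
  have h3 := huniq φ ⟨hφ, rfl⟩
  have h4 := huniq ψ ⟨hψ, e.symm⟩
  rw [h3, h4]
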